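/- Let P be future-directed timelike with κ := √(−η(P,P)), u a future-directed unit timelike vector, and S an antisymmetric tensor (the spin tensor S[x] at some point x). Then the centre-of-spin condition at x relative to u holds if and only if the 3-form u♭ ∧ P♭ ∧ α vanishes, where α is the covector with components α_ρ := Σ_σ (u^σ + P^σ/κ) S_{σρ}; explicitly, if and only if for all μ,ν,ρ: u_μP_να_ρ + u_νP_ρα_μ + u_ρP_μα_ν − u_μP_ρα_ν − u_νP_μα_ρ − u_ρP_να_μ = 0. -/

import Mathlib

noncomputable section

open Finset

abbrev V4 := Fin 4 → ℝ

/-- Sign of the Minkowski metric diag(-1,1,1,1) on the diagonal. -/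
def sgn4 (μ : Fin 4) : ℝ := if μ = 0 then -1 else 1

/-- Index lowering with η = diag(-1,1,1,1): `lo v μ = v_μ`. -/
def lo (v : V4) : V4 := fun μ => sgn4 μ * v μ

/-- Minkowski bilinear form of signature (-,+,+,+). -/
def mink (v w : V4) : ℝ := ∑ μ, lo v μ * w μ

/-- Future-directed timelike vector. -/
def FDTimelike (v : V4) : Prop := mink v v < 0 ∧ 0 < v 0

/-- Future-directed unit timelike vector. -/
def FDUnit (u : V4) : Prop := mink u u = -1 ∧ 0 < u 0

/-- κ = √(−η(P,P)). -/
def kappa (P : V4) : ℝ := Real.sqrt (-(mink P P))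

/-- Spin tensor at the point x: S[x]_{μν} = J_{μν} − x_μ P_ν + x_ν P_μ. -/
def spinT (J : Fin 4 → Fin 4 → ℝ) (P x : V4) (μ ν : Fin 4) : ℝ :=
  J μ ν - lo x μ * lo P ν + lo x ν * lo P μ

/-- SSC worldline with respect to f: points where S[x]_{μν} f^ν = 0. -/
def SSCline (J : Fin 4 → Fin 4 → ℝ) (P f : V4) : Set V4 :=
  {x | ∀ μ, ∑ ν, spinT J P x μ ν * f ν = 0}

/-- Sign of an integer, valued in ℝ. -/
def isgn (x : ℤ) : ℝ := if 0 < x then 1 else if x < 0 then -1 else 0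

/-- Totally antisymmetric symbol on four indices with ε₀₁₂₃ = +1. -/
def eps4 (μ ν ρ σ : Fin 4) : ℝ :=
  isgn (((ν : ℕ) : ℤ) - ((μ : ℕ) : ℤ)) * isgn (((ρ : ℕ) : ℤ) - ((μ : ℕ) : ℤ)) *
  isgn (((σ : ℕ) : ℤ) - ((μ : ℕ) : ℤ)) * isgn (((ρ : ℕ) : ℤ) - ((ν : ℕ) : ℤ)) *
  isgn (((σ : ℕ) : ℤ) - ((ν : ℕ) : ℤ)) * isgn (((σ : ℕ) : ℤ) - ((ρ : ℕ) : ℤ))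

/-- Raising both indices of a (0,2)-tensor with the inverse metric: S^{ρσ}. -/
def raise2 (S : Fin 4 → Fin 4 → ℝ) (ρ σ : Fin 4) : ℝ := sgn4 ρ * sgn4 σ * S ρ σ

/-- The standard boost B(u) mapping P/κ to u:
B^μ_ν = δ^μ_ν + (P^μ/κ + u^μ)(P_ν/κ + u_ν)/(1 − η(u,P)/κ) − (2/κ) u^μ P_ν. -/
def boost (P u : V4) (μ ν : Fin 4) : ℝ :=
  (if μ = ν then 1 else 0)
  + (P μ / kappa P + u μ) * (lo P ν / kappa P + lo u ν) / (1 - mink u P / kappa P)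
  - (2 / kappa P) * u μ * lo P ν

/-- Lowered components of the Pauli–Lubański covector built from P and an
antisymmetric tensor S: W_μ = −(1/2) ε_{μνρσ} P^ν S^{ρσ}. -/
def PL (P : V4) (S : Fin 4 → Fin 4 → ℝ) (μ : Fin 4) : ℝ :=
  -(1/2) * ∑ ν, ∑ ρ, ∑ σ, eps4 μ ν ρ σ * P ν * raise2 S ρ σ

/-- Lowered components of the spin vector in the frame u:
s_μ = η_{μλ} (1/κ) B(u)^λ_ν W^ν. -/
def spinVec (P u : V4) (S : Fin 4 → Fin 4 → ℝ) (μ : Fin 4) : ℝ :=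
  sgn4 μ * ((1 / kappa P) * ∑ ν, boost P u μ ν * (sgn4 ν * PL P S ν))

/-- Centre-of-spin condition for the antisymmetric tensor S relative to u:
s_μ = −(1/2) ε_{μνρσ} u^ν S^{ρσ}. -/
def CentreOfSpin (P u : V4) (S : Fin 4 → Fin 4 → ℝ) : Prop :=
  ∀ μ, spinVec P u S μ = -(1/2) * ∑ ν, ∑ ρ, ∑ σ, eps4 μ ν ρ σ * u ν * raise2 S ρ σ


set_option maxHeartbeats 4000000
def numr (P u : V4) (μ ν : Fin 4) : ℝ :=
  (if μ = ν then (1:ℝ) else 0) * (kappa P * (kappa P - mink u P))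
  + (P μ + kappa P * u μ) * (lo P ν + kappa P * lo u ν)
  - 2 * (kappa P - mink u P) * (u μ * lo P ν)

def TAdef (P u : V4) (S : Fin 4 → Fin 4 → ℝ) (μ : Fin 4) : ℝ :=
  ∑ ν, ∑ ρ, ∑ σ, eps4 μ ν ρ σ * u ν * P ρ * (sgn4 σ * ∑ τ, (kappa P * u τ + P τ) * S τ σ)

theorem statement3 (P u : V4) (S : Fin 4 → Fin 4 → ℝ) (α : Fin 4 → ℝ)
    (hP : FDTimelike P) (hu : FDUnit u) (hS : ∀ μ ν, S μ ν = - S ν μ)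
    (hα : ∀ ρ, α ρ = ∑ σ, (u σ + P σ / kappa P) * S σ ρ) :
    CentreOfSpin P u S ↔
      ∀ μ ν ρ, lo u μ * lo P ν * α ρ + lo u ν * lo P ρ * α μ + lo u ρ * lo P μ * α ν
        - lo u μ * lo P ρ * α ν - lo u ν * lo P μ * α ρ - lo u ρ * lo P ν * α μ = 0 := by
  obtain ⟨hPt, hP0⟩ := hP
  obtain ⟨huu, hu0⟩ := hu
  have hmP : mink P P = -(P 0 * P 0) + P 1 * P 1 + P 2 * P 2 + P 3 * P 3 := by
    simp [mink, lo, sgn4, Fin.sum_univ_four]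
  have hmu : mink u u = -(u 0 * u 0) + u 1 * u 1 + u 2 * u 2 + u 3 * u 3 := by
    simp [mink, lo, sgn4, Fin.sum_univ_four]
  have hmuP : mink u P = -(u 0 * P 0) + u 1 * P 1 + u 2 * P 2 + u 3 * P 3 := by
    simp [mink, lo, sgn4, Fin.sum_univ_four]
  have hkpos : 0 < kappa P := Real.sqrt_pos.mpr (by linarith)
  have hkne : kappa P ≠ 0 := ne_of_gt hkpos
  have hk2 : kappa P ^ 2 = P 0 ^ 2 - P 1 ^ 2 - P 2 ^ 2 - P 3 ^ 2 := by
    rw [kappa, Real.sq_sqrt (by linarith), hmP]; ring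
  have hu1 : u 0 ^ 2 = 1 + u 1 ^ 2 + u 2 ^ 2 + u 3 ^ 2 := by
    rw [hmu] at huu; nlinarith [huu]
  have hmuPneg : mink u P < 0 := by
    rw [hmuP]
    nlinarith [sq_nonneg (u 1 * P 2 - u 2 * P 1), sq_nonneg (u 1 * P 3 - u 3 * P 1),
      sq_nonneg (u 2 * P 3 - u 3 * P 2), mul_pos hu0 hP0, hk2, hu1, hkpos,
      sq_nonneg (kappa P), mul_pos hkpos hkpos,
      sq_nonneg (u 0 * P 0 + (u 1 * P 1 + u 2 * P 2 + u 3 * P 3))]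
  have hDpos : 0 < kappa P - mink u P := by linarith
  have hDne : kappa P - mink u P ≠ 0 := ne_of_gt hDpos
  have hdenne : 1 - mink u P / kappa P ≠ 0 := by
    have h := div_neg_of_neg_of_pos hmuPneg hkpos
    intro hc; rw [sub_eq_zero] at hc; rw [← hc] at h; linarith
  have hd0 : S 0 0 = 0 := by have := hS 0 0; linarith
  have hd1 : S 1 1 = 0 := by have := hS 1 1; linarith
  have hd2 : S 2 2 = 0 := by have := hS 2 2; linarith
  have hd3 : S 3 3 = 0 := by have := hS 3 3; linarith
  have hboost : ∀ μ ν, boost P u μ ν = numr P u μ ν / (kappa P * (kappa P - mink u P)) := by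
    intro μ ν
    rw [boost, numr]
    rcases eq_or_ne μ ν with h | h
    · simp only [if_pos h]
      field_simp
    · simp only [if_neg h]
      field_simp
  have hnum : ∀ μ, kappa P ^ 2 * (kappa P - mink u P) * spinVec P u S μ
      = sgn4 μ * ∑ ν, numr P u μ ν * (sgn4 ν * PL P S ν) := by
    intro μ
    rw [spinVec]
    simp only [hboost]
    rw [Fin.sum_univ_four, Fin.sum_univ_four]
    field_simp
  have hpoly : ∀ μ, sgn4 μ * (∑ ν, numr P u μ ν * (sgn4 ν * PL P S ν))
      - kappa P ^ 2 * (kappa P - mink u P)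
        * (-(1/2) * ∑ ν, ∑ ρ, ∑ σ, eps4 μ ν ρ σ * u ν * raise2 S ρ σ)
      = -(kappa P) * TAdef P u S μ := by
    intro μ
    have e1 := hS 1 0; have e2 := hS 2 0; have e3 := hS 3 0
    have e4 := hS 2 1; have e5 := hS 3 1; have e6 := hS 3 2
    fin_cases μ
    · norm_num [numr, TAdef, PL, raise2, eps4, isgn, mink, lo, sgn4, Fin.sum_univ_four, show ((⟨0, by omega⟩ : Fin 4)) = 0 from rfl, show ((⟨1, by omega⟩ : Fin 4)) = 1 from rfl, show ((⟨2, by omega⟩ : Fin 4)) = 2 from rfl, show ((⟨3, by omega⟩ : Fin 4)) = 3 from rfl, show ((0:Fin 4):ℕ) = 0 from rfl, show ((1:Fin 4):ℕ) = 1 from rfl, show ((2:Fin 4):ℕ) = 2 from rfl, show ((3:Fin 4):ℕ) = 3 from rfl]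
      simp (config := { decide := true }) only [if_true, if_false]
      simp only [e1, e2, e3, e4, e5, e6, hd0, hd1, hd2, hd3]
      linear_combination ((-1:ℝ)*P 3*S 1 2 + P 2*S 1 3 + (-1:ℝ)*P 1*S 2 3 + u 3*kappa P*S 1 2 + (-1:ℝ)*u 3*u 3*P 3*S 1 2 + u 3*u 3*P 2*S 1 3 + (-1:ℝ)*u 3*u 3*P 1*S 2 3 + (-1:ℝ)*u 2*kappa P*S 1 3 + (-1:ℝ)*u 2*u 2*P 3*S 1 2 + u 2*u 2*P 2*S 1 3 + (-1:ℝ)*u 2*u 2*P 1*S 2 3 + u 1*kappa P*S 2 3 + (-1:ℝ)*u 1*u 1*P 3*S 1 2 + u 1*u 1*P 2*S 1 3 + (-1:ℝ)*u 1*u 1*P 1*S 2 3 + u 0*u 0*P 3*S 1 2 + (-1:ℝ)*u 0*u 0*P 2*S 1 3 + u 0*u 0*P 1*S 2 3) * hk2 + ((-1:ℝ)*P 3*P 3*P 3*S 1 2 + P 2*P 3*P 3*S 1 3 + (-1:ℝ)*P 2*P 2*P 3*S 1 2 + P 2*P 2*P 2*S 1 3 + (-1:ℝ)*P 1*P 3*P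 3*S 2 3 + (-1:ℝ)*P 1*P 2*P 2*S 2 3 + (-1:ℝ)*P 1*P 1*P 3*S 1 2 + P 1*P 1*P 2*S 1 3 + (-1:ℝ)*P 1*P 1*P 1*S 2 3 + P 0*P 0*P 3*S 1 2 + (-1:ℝ)*P 0*P 0*P 2*S 1 3 + P 0*P 0*P 1*S 2 3) * hu1
    · norm_num [numr, TAdef, PL, raise2, eps4, isgn, mink, lo, sgn4, Fin.sum_univ_four, show ((⟨0, by omega⟩ : Fin 4)) = 0 from rfl, show ((⟨1, by omega⟩ : Fin 4)) = 1 from rfl, show ((⟨2, by omega⟩ : Fin 4)) = 2 from rfl, show ((⟨3, by omega⟩ : Fin 4)) = 3 from rfl, show ((0:Fin 4):ℕ) = 0 from rfl, show ((1:Fin 4):ℕ) = 1 from rfl, show ((2:Fin 4):ℕ) = 2 from rfl, show ((3:Fin 4):ℕ) = 3 from rfl]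
      simp (config := { decide := true }) only [if_true, if_false]
      simp only [e1, e2, e3, e4, e5, e6, hd0, hd1, hd2, hd3]
      linear_combination ((-1:ℝ)*P 3*S 0 2 + P 2*S 0 3 + P 0*S 2 3 + u 3*kappa P*S 0 2 + (-1:ℝ)*u 3*u 3*P 3*S 0 2 + u 3*u 3*P 2*S 0 3 + u 3*u 3*P 0*S 2 3 + (-1:ℝ)*u 2*kappa P*S 0 3 + (-1:ℝ)*u 2*u 2*P 3*S 0 2 + u 2*u 2*P 2*S 0 3 + u 2*u 2*P 0*S 2 3 + (-1:ℝ)*u 1*u 1*P 3*S 0 2 + u 1*u 1*P 2*S 0 3 + u 1*u 1*P 0*S 2 3 + (-1:ℝ)*u 0*kappa P*S 2 3 + u 0*u 0*P 3*S 0 2 + (-1:ℝ)*u 0*u 0*P 2*S 0 3 + (-1:ℝ)*u 0*u 0*P 0*S 2 3) * hk2 + ((-1:ℝ)*P 3*P 3*P 3*S 0 2 + P 2*P 3*P 3*S 0 3 + (-1:ℝ)*P 2*P 2*P 3*S 0 2 + P 2*P 2*P 2*S 0 3 + (-1:ℝ)*P 1*P 1*P 3*S 0 2 + P 1*P 1*P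 2*S 0 3 + P 0*P 3*P 3*S 2 3 + P 0*P 2*P 2*S 2 3 + P 0*P 1*P 1*S 2 3 + P 0*P 0*P 3*S 0 2 + (-1:ℝ)*P 0*P 0*P 2*S 0 3 + (-1:ℝ)*P 0*P 0*P 0*S 2 3) * hu1
    · norm_num [numr, TAdef, PL, raise2, eps4, isgn, mink, lo, sgn4, Fin.sum_univ_four, show ((⟨0, by omega⟩ : Fin 4)) = 0 from rfl, show ((⟨1, by omega⟩ : Fin 4)) = 1 from rfl, show ((⟨2, by omega⟩ : Fin 4)) = 2 from rfl, show ((⟨3, by omega⟩ : Fin 4)) = 3 from rfl, show ((0:Fin 4):ℕ) = 0 from rfl, show ((1:Fin 4):ℕ) = 1 from rfl, show ((2:Fin 4):ℕ) = 2 from rfl, show ((3:Fin 4):ℕ) = 3 from rfl]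
      simp (config := { decide := true }) only [if_true, if_false]
      simp only [e1, e2, e3, e4, e5, e6, hd0, hd1, hd2, hd3]
      linear_combination (P 3*S 0 1 + (-1:ℝ)*P 1*S 0 3 + (-1:ℝ)*P 0*S 1 3 + (-1:ℝ)*u 3*kappa P*S 0 1 + u 3*u 3*P 3*S 0 1 + (-1:ℝ)*u 3*u 3*P 1*S 0 3 + (-1:ℝ)*u 3*u 3*P 0*S 1 3 + u 2*u 2*P 3*S 0 1 + (-1:ℝ)*u 2*u 2*P 1*S 0 3 + (-1:ℝ)*u 2*u 2*P 0*S 1 3 + u 1*kappa P*S 0 3 + u 1*u 1*P 3*S 0 1 + (-1:ℝ)*u 1*u 1*P 1*S 0 3 + (-1:ℝ)*u 1*u 1*P 0*S 1 3 + u 0*kappa P*S 1 3 + (-1:ℝ)*u 0*u 0*P 3*S 0 1 + u 0*u 0*P 1*S 0 3 + u 0*u 0*P 0*S 1 3) * hk2 + (P 3*P 3*P 3*S 0 1 + P 2*P 2*P 3*S 0 1 + (-1:ℝ)*P 1*P 3*P 3*S 0 3 + (-1:ℝ)*P 1*P 2*P 2*S 0 3 + P 1*P 1*P 3*S 0 1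 + (-1:ℝ)*P 1*P 1*P 1*S 0 3 + (-1:ℝ)*P 0*P 3*P 3*S 1 3 + (-1:ℝ)*P 0*P 2*P 2*S 1 3 + (-1:ℝ)*P 0*P 1*P 1*S 1 3 + (-1:ℝ)*P 0*P 0*P 3*S 0 1 + P 0*P 0*P 1*S 0 3 + P 0*P 0*P 0*S 1 3) * hu1
    · norm_num [numr, TAdef, PL, raise2, eps4, isgn, mink, lo, sgn4, Fin.sum_univ_four, show ((⟨0, by omega⟩ : Fin 4)) = 0 from rfl, show ((⟨1, by omega⟩ : Fin 4)) = 1 from rfl, show ((⟨2, by omega⟩ : Fin 4)) = 2 from rfl, show ((⟨3, by omega⟩ : Fin 4)) = 3 from rfl, show ((0:Fin 4):ℕ) = 0 from rfl, show ((1:Fin 4):ℕ) = 1 from rfl, show ((2:Fin 4):ℕ) = 2 from rfl, show ((3:Fin 4):ℕ) = 3 from rfl]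
      simp (config := { decide := true }) only [if_true, if_false]
      simp only [e1, e2, e3, e4, e5, e6, hd0, hd1, hd2, hd3]
      linear_combination ((-1:ℝ)*P 2*S 0 1 + P 1*S 0 2 + P 0*S 1 2 + (-1:ℝ)*u 3*u 3*P 2*S 0 1 + u 3*u 3*P 1*S 0 2 + u 3*u 3*P 0*S 1 2 + u 2*kappa P*S 0 1 + (-1:ℝ)*u 2*u 2*P 2*S 0 1 + u 2*u 2*P 1*S 0 2 + u 2*u 2*P 0*S 1 2 + (-1:ℝ)*u 1*kappa P*S 0 2 + (-1:ℝ)*u 1*u 1*P 2*S 0 1 + u 1*u 1*P 1*S 0 2 + u 1*u 1*P 0*S 1 2 + (-1:ℝ)*u 0*kappa P*S 1 2 + u 0*u 0*P 2*S 0 1 + (-1:ℝ)*u 0*u 0*P 1*S 0 2 + (-1:ℝ)*u 0*u 0*P 0*S 1 2) * hk2 + ((-1:ℝ)*P 2*P 3*P 3*S 0 1 + (-1:ℝ)*P 2*P 2*P 2*S 0 1 + P 1*P 3*P 3*S 0 2 + P 1*P 2*P 2*S 0 2 + (-1:ℝ)*P 1*P 1*P 2*S 0 1 + P 1*P 1*P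 1*S 0 2 + P 0*P 3*P 3*S 1 2 + P 0*P 2*P 2*S 1 2 + P 0*P 1*P 1*S 1 2 + P 0*P 0*P 2*S 0 1 + (-1:ℝ)*P 0*P 0*P 1*S 0 2 + (-1:ℝ)*P 0*P 0*P 0*S 1 2) * hu1
  have key : ∀ μ, (spinVec P u S μ
      = -(1/2) * ∑ ν, ∑ ρ, ∑ σ, eps4 μ ν ρ σ * u ν * raise2 S ρ σ) ↔ TAdef P u S μ = 0 := by
    intro μ
    constructor
    · intro h
      have h2 := hpoly μ
      rw [← hnum μ, h, sub_self] at h2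
      rcases mul_eq_zero.mp h2.symm with h3 | h3
      · exact absurd (neg_eq_zero.mp h3) hkne
      · exact h3
    · intro h
      have h2 := hpoly μ
      rw [h, mul_zero, sub_eq_zero] at h2
      refine mul_left_cancel₀ (mul_ne_zero (pow_ne_zero 2 hkne) hDne) ?_
      rw [hnum μ, h2]
  have hA : ∀ σ, kappa P * α σ
      = (kappa P * u 0 + P 0) * S 0 σ + (kappa P * u 1 + P 1) * S 1 σ
      + (kappa P * u 2 + P 2) * S 2 σ + (kappa P * u 3 + P 3) * S 3 σ := by
    intro σ
    rw [hα, Fin.sum_univ_four]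
    field_simp
  unfold CentreOfSpin
  constructor
  · intro hc
    have h := fun μ => (key μ).mp (hc μ)
    have h0 := h 0; have h1 := h 1; have h2 := h 2; have h3 := h 3
    norm_num [TAdef, eps4, isgn, sgn4, Fin.sum_univ_four, show ((⟨0, by omega⟩ : Fin 4)) = 0 from rfl, show ((⟨1, by omega⟩ : Fin 4)) = 1 from rfl, show ((⟨2, by omega⟩ : Fin 4)) = 2 from rfl, show ((⟨3, by omega⟩ : Fin 4)) = 3 from rfl, show ((0:Fin 4):ℕ) = 0 from rfl, show ((1:Fin 4):ℕ) = 1 from rfl, show ((2:Fin 4):ℕ) = 2 from rfl, show ((3:Fin 4):ℕ) = 3 from rfl] at h0 h1 h2 h3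
    simp (config := { decide := true }) only [if_true, if_false] at h0 h1 h2 h3
    intro μ ν ρ
    fin_cases μ <;> fin_cases ν <;> fin_cases ρ
    · ring
    · ring
    · ring
    · ring
    · ring
    · ring
    · refine mul_left_cancel₀ hkne ?_
      rw [mul_zero]
      simp (config := { decide := true }) only [lo, sgn4, if_true, if_false, show ((⟨0, by omega⟩ : Fin 4)) = 0 from rfl, show ((⟨1, by omega⟩ : Fin 4)) = 1 from rfl, show ((⟨2, by omega⟩ : Fin 4)) = 2 from rfl, show ((⟨3, by omega⟩ : Fin 4)) = 3 from rfl]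
      linear_combination h3 + ((-1)*u 2*P 1 + u 1*P 2) * hA 0 + ((-1)*u 2*P 0 + u 0*P 2) * hA 1 + (u 1*P 0 + (-1)*u 0*P 1) * hA 2
    · refine mul_left_cancel₀ hkne ?_
      rw [mul_zero]
      simp (config := { decide := true }) only [lo, sgn4, if_true, if_false, show ((⟨0, by omega⟩ : Fin 4)) = 0 from rfl, show ((⟨1, by omega⟩ : Fin 4)) = 1 from rfl, show ((⟨2, by omega⟩ : Fin 4)) = 2 from rfl, show ((⟨3, by omega⟩ : Fin 4)) = 3 from rfl]
      linear_combination (-1:ℝ) * h2 + ((-1)*u 3*P 1 + u 1*P 3) * hA 0 + ((-1)*u 3*P 0 + u 0*P 3) * hA 1 + (u 1*P 0 + (-1)*u 0*P 1) * hA 3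
    · ring
    · refine mul_left_cancel₀ hkne ?_
      rw [mul_zero]
      simp (config := { decide := true }) only [lo, sgn4, if_true, if_false, show ((⟨0, by omega⟩ : Fin 4)) = 0 from rfl, show ((⟨1, by omega⟩ : Fin 4)) = 1 from rfl, show ((⟨2, by omega⟩ : Fin 4)) = 2 from rfl, show ((⟨3, by omega⟩ : Fin 4)) = 3 from rfl]
      linear_combination (-1:ℝ) * h3 + (u 2*P 1 + (-1)*u 1*P 2) * hA 0 + (u 2*P 0 + (-1)*u 0*P 2) * hA 1 + ((-1)*u 1*P 0 + u 0*P 1) * hA 2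
    · ring
    · refine mul_left_cancel₀ hkne ?_
      rw [mul_zero]
      simp (config := { decide := true }) only [lo, sgn4, if_true, if_false, show ((⟨0, by omega⟩ : Fin 4)) = 0 from rfl, show ((⟨1, by omega⟩ : Fin 4)) = 1 from rfl, show ((⟨2, by omega⟩ : Fin 4)) = 2 from rfl, show ((⟨3, by omega⟩ : Fin 4)) = 3 from rfl]
      linear_combination h1 + ((-1)*u 3*P 2 + u 2*P 3) * hA 0 + ((-1)*u 3*P 0 + u 0*P 3) * hA 2 + (u 2*P 0 + (-1)*u 0*P 2) * hA 3
    · ring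
    · refine mul_left_cancel₀ hkne ?_
      rw [mul_zero]
      simp (config := { decide := true }) only [lo, sgn4, if_true, if_false, show ((⟨0, by omega⟩ : Fin 4)) = 0 from rfl, show ((⟨1, by omega⟩ : Fin 4)) = 1 from rfl, show ((⟨2, by omega⟩ : Fin 4)) = 2 from rfl, show ((⟨3, by omega⟩ : Fin 4)) = 3 from rfl]
      linear_combination h2 + (u 3*P 1 + (-1)*u 1*P 3) * hA 0 + (u 3*P 0 + (-1)*u 0*P 3) * hA 1 + ((-1)*u 1*P 0 + u 0*P 1) * hA 3
    · refine mul_left_cancel₀ hkne ?_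
      rw [mul_zero]
      simp (config := { decide := true }) only [lo, sgn4, if_true, if_false, show ((⟨0, by omega⟩ : Fin 4)) = 0 from rfl, show ((⟨1, by omega⟩ : Fin 4)) = 1 from rfl, show ((⟨2, by omega⟩ : Fin 4)) = 2 from rfl, show ((⟨3, by omega⟩ : Fin 4)) = 3 from rfl]
      linear_combination (-1:ℝ) * h1 + (u 3*P 2 + (-1)*u 2*P 3) * hA 0 + (u 3*P 0 + (-1)*u 0*P 3) * hA 2 + ((-1)*u 2*P 0 + u 0*P 2) * hA 3
    · ring
    · ring
    · ring
    · refine mul_left_cancel₀ hkne ?_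
      rw [mul_zero]
      simp (config := { decide := true }) only [lo, sgn4, if_true, if_false, show ((⟨0, by omega⟩ : Fin 4)) = 0 from rfl, show ((⟨1, by omega⟩ : Fin 4)) = 1 from rfl, show ((⟨2, by omega⟩ : Fin 4)) = 2 from rfl, show ((⟨3, by omega⟩ : Fin 4)) = 3 from rfl]
      linear_combination (-1:ℝ) * h3 + (u 2*P 1 + (-1)*u 1*P 2) * hA 0 + (u 2*P 0 + (-1)*u 0*P 2) * hA 1 + ((-1)*u 1*P 0 + u 0*P 1) * hA 2
    · refine mul_left_cancel₀ hkne ?_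
      rw [mul_zero]
      simp (config := { decide := true }) only [lo, sgn4, if_true, if_false, show ((⟨0, by omega⟩ : Fin 4)) = 0 from rfl, show ((⟨1, by omega⟩ : Fin 4)) = 1 from rfl, show ((⟨2, by omega⟩ : Fin 4)) = 2 from rfl, show ((⟨3, by omega⟩ : Fin 4)) = 3 from rfl]
      linear_combination h2 + (u 3*P 1 + (-1)*u 1*P 3) * hA 0 + (u 3*P 0 + (-1)*u 0*P 3) * hA 1 + ((-1)*u 1*P 0 + u 0*P 1) * hA 3
    · ring
    · ring
    · ring
    · ring
    · refine mul_left_cancel₀ hkne ?_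
      rw [mul_zero]
      simp (config := { decide := true }) only [lo, sgn4, if_true, if_false, show ((⟨0, by omega⟩ : Fin 4)) = 0 from rfl, show ((⟨1, by omega⟩ : Fin 4)) = 1 from rfl, show ((⟨2, by omega⟩ : Fin 4)) = 2 from rfl, show ((⟨3, by omega⟩ : Fin 4)) = 3 from rfl]
      linear_combination h3 + ((-1)*u 2*P 1 + u 1*P 2) * hA 0 + ((-1)*u 2*P 0 + u 0*P 2) * hA 1 + (u 1*P 0 + (-1)*u 0*P 1) * hA 2
    · ring
    · ring
    · refine mul_left_cancel₀ hkne ?_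
      rw [mul_zero]
      simp (config := { decide := true }) only [lo, sgn4, if_true, if_false, show ((⟨0, by omega⟩ : Fin 4)) = 0 from rfl, show ((⟨1, by omega⟩ : Fin 4)) = 1 from rfl, show ((⟨2, by omega⟩ : Fin 4)) = 2 from rfl, show ((⟨3, by omega⟩ : Fin 4)) = 3 from rfl]
      linear_combination h0 + ((-1)*u 3*P 2 + u 2*P 3) * hA 1 + (u 3*P 1 + (-1)*u 1*P 3) * hA 2 + ((-1)*u 2*P 1 + u 1*P 2) * hA 3
    · refine mul_left_cancel₀ hkne ?_
      rw [mul_zero]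
      simp (config := { decide := true }) only [lo, sgn4, if_true, if_false, show ((⟨0, by omega⟩ : Fin 4)) = 0 from rfl, show ((⟨1, by omega⟩ : Fin 4)) = 1 from rfl, show ((⟨2, by omega⟩ : Fin 4)) = 2 from rfl, show ((⟨3, by omega⟩ : Fin 4)) = 3 from rfl]
      linear_combination (-1:ℝ) * h2 + ((-1)*u 3*P 1 + u 1*P 3) * hA 0 + ((-1)*u 3*P 0 + u 0*P 3) * hA 1 + (u 1*P 0 + (-1)*u 0*P 1) * hA 3
    · ring
    · refine mul_left_cancel₀ hkne ?_
      rw [mul_zero]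
      simp (config := { decide := true }) only [lo, sgn4, if_true, if_false, show ((⟨0, by omega⟩ : Fin 4)) = 0 from rfl, show ((⟨1, by omega⟩ : Fin 4)) = 1 from rfl, show ((⟨2, by omega⟩ : Fin 4)) = 2 from rfl, show ((⟨3, by omega⟩ : Fin 4)) = 3 from rfl]
      linear_combination (-1:ℝ) * h0 + (u 3*P 2 + (-1)*u 2*P 3) * hA 1 + ((-1)*u 3*P 1 + u 1*P 3) * hA 2 + (u 2*P 1 + (-1)*u 1*P 2) * hA 3
    · ring
    · ring
    · refine mul_left_cancel₀ hkne ?_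
      rw [mul_zero]
      simp (config := { decide := true }) only [lo, sgn4, if_true, if_false, show ((⟨0, by omega⟩ : Fin 4)) = 0 from rfl, show ((⟨1, by omega⟩ : Fin 4)) = 1 from rfl, show ((⟨2, by omega⟩ : Fin 4)) = 2 from rfl, show ((⟨3, by omega⟩ : Fin 4)) = 3 from rfl]
      linear_combination h3 + ((-1)*u 2*P 1 + u 1*P 2) * hA 0 + ((-1)*u 2*P 0 + u 0*P 2) * hA 1 + (u 1*P 0 + (-1)*u 0*P 1) * hA 2
    · ring
    · refine mul_left_cancel₀ hkne ?_
      rw [mul_zero]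
      simp (config := { decide := true }) only [lo, sgn4, if_true, if_false, show ((⟨0, by omega⟩ : Fin 4)) = 0 from rfl, show ((⟨1, by omega⟩ : Fin 4)) = 1 from rfl, show ((⟨2, by omega⟩ : Fin 4)) = 2 from rfl, show ((⟨3, by omega⟩ : Fin 4)) = 3 from rfl]
      linear_combination (-1:ℝ) * h1 + (u 3*P 2 + (-1)*u 2*P 3) * hA 0 + (u 3*P 0 + (-1)*u 0*P 3) * hA 2 + ((-1)*u 2*P 0 + u 0*P 2) * hA 3
    · refine mul_left_cancel₀ hkne ?_
      rw [mul_zero]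
      simp (config := { decide := true }) only [lo, sgn4, if_true, if_false, show ((⟨0, by omega⟩ : Fin 4)) = 0 from rfl, show ((⟨1, by omega⟩ : Fin 4)) = 1 from rfl, show ((⟨2, by omega⟩ : Fin 4)) = 2 from rfl, show ((⟨3, by omega⟩ : Fin 4)) = 3 from rfl]
      linear_combination (-1:ℝ) * h3 + (u 2*P 1 + (-1)*u 1*P 2) * hA 0 + (u 2*P 0 + (-1)*u 0*P 2) * hA 1 + ((-1)*u 1*P 0 + u 0*P 1) * hA 2
    · ring
    · ring
    · refine mul_left_cancel₀ hkne ?_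
      rw [mul_zero]
      simp (config := { decide := true }) only [lo, sgn4, if_true, if_false, show ((⟨0, by omega⟩ : Fin 4)) = 0 from rfl, show ((⟨1, by omega⟩ : Fin 4)) = 1 from rfl, show ((⟨2, by omega⟩ : Fin 4)) = 2 from rfl, show ((⟨3, by omega⟩ : Fin 4)) = 3 from rfl]
      linear_combination (-1:ℝ) * h0 + (u 3*P 2 + (-1)*u 2*P 3) * hA 1 + ((-1)*u 3*P 1 + u 1*P 3) * hA 2 + (u 2*P 1 + (-1)*u 1*P 2) * hA 3
    · ring
    · ring
    · ring
    · ring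
    · refine mul_left_cancel₀ hkne ?_
      rw [mul_zero]
      simp (config := { decide := true }) only [lo, sgn4, if_true, if_false, show ((⟨0, by omega⟩ : Fin 4)) = 0 from rfl, show ((⟨1, by omega⟩ : Fin 4)) = 1 from rfl, show ((⟨2, by omega⟩ : Fin 4)) = 2 from rfl, show ((⟨3, by omega⟩ : Fin 4)) = 3 from rfl]
      linear_combination h1 + ((-1)*u 3*P 2 + u 2*P 3) * hA 0 + ((-1)*u 3*P 0 + u 0*P 3) * hA 2 + (u 2*P 0 + (-1)*u 0*P 2) * hA 3
    · refine mul_left_cancel₀ hkne ?_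
      rw [mul_zero]
      simp (config := { decide := true }) only [lo, sgn4, if_true, if_false, show ((⟨0, by omega⟩ : Fin 4)) = 0 from rfl, show ((⟨1, by omega⟩ : Fin 4)) = 1 from rfl, show ((⟨2, by omega⟩ : Fin 4)) = 2 from rfl, show ((⟨3, by omega⟩ : Fin 4)) = 3 from rfl]
      linear_combination h0 + ((-1)*u 3*P 2 + u 2*P 3) * hA 1 + (u 3*P 1 + (-1)*u 1*P 3) * hA 2 + ((-1)*u 2*P 1 + u 1*P 2) * hA 3
    · ring
    · ring
    · ring
    · refine mul_left_cancel₀ hkne ?_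
      rw [mul_zero]
      simp (config := { decide := true }) only [lo, sgn4, if_true, if_false, show ((⟨0, by omega⟩ : Fin 4)) = 0 from rfl, show ((⟨1, by omega⟩ : Fin 4)) = 1 from rfl, show ((⟨2, by omega⟩ : Fin 4)) = 2 from rfl, show ((⟨3, by omega⟩ : Fin 4)) = 3 from rfl]
      linear_combination (-1:ℝ) * h2 + ((-1)*u 3*P 1 + u 1*P 3) * hA 0 + ((-1)*u 3*P 0 + u 0*P 3) * hA 1 + (u 1*P 0 + (-1)*u 0*P 1) * hA 3
    · refine mul_left_cancel₀ hkne ?_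
      rw [mul_zero]
      simp (config := { decide := true }) only [lo, sgn4, if_true, if_false, show ((⟨0, by omega⟩ : Fin 4)) = 0 from rfl, show ((⟨1, by omega⟩ : Fin 4)) = 1 from rfl, show ((⟨2, by omega⟩ : Fin 4)) = 2 from rfl, show ((⟨3, by omega⟩ : Fin 4)) = 3 from rfl]
      linear_combination h1 + ((-1)*u 3*P 2 + u 2*P 3) * hA 0 + ((-1)*u 3*P 0 + u 0*P 3) * hA 2 + (u 2*P 0 + (-1)*u 0*P 2) * hA 3
    · ring
    · refine mul_left_cancel₀ hkne ?_
      rw [mul_zero]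
      simp (config := { decide := true }) only [lo, sgn4, if_true, if_false, show ((⟨0, by omega⟩ : Fin 4)) = 0 from rfl, show ((⟨1, by omega⟩ : Fin 4)) = 1 from rfl, show ((⟨2, by omega⟩ : Fin 4)) = 2 from rfl, show ((⟨3, by omega⟩ : Fin 4)) = 3 from rfl]
      linear_combination h2 + (u 3*P 1 + (-1)*u 1*P 3) * hA 0 + (u 3*P 0 + (-1)*u 0*P 3) * hA 1 + ((-1)*u 1*P 0 + u 0*P 1) * hA 3
    · ring
    · refine mul_left_cancel₀ hkne ?_
      rw [mul_zero]
      simp (config := { decide := true }) only [lo, sgn4, if_true, if_false, show ((⟨0, by omega⟩ : Fin 4)) = 0 from rfl, show ((⟨1, by omega⟩ : Fin 4)) = 1 from rfl, show ((⟨2, by omega⟩ : Fin 4)) = 2 from rfl, show ((⟨3, by omega⟩ : Fin 4)) = 3 from rfl]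
      linear_combination h0 + ((-1)*u 3*P 2 + u 2*P 3) * hA 1 + (u 3*P 1 + (-1)*u 1*P 3) * hA 2 + ((-1)*u 2*P 1 + u 1*P 2) * hA 3
    · ring
    · refine mul_left_cancel₀ hkne ?_
      rw [mul_zero]
      simp (config := { decide := true }) only [lo, sgn4, if_true, if_false, show ((⟨0, by omega⟩ : Fin 4)) = 0 from rfl, show ((⟨1, by omega⟩ : Fin 4)) = 1 from rfl, show ((⟨2, by omega⟩ : Fin 4)) = 2 from rfl, show ((⟨3, by omega⟩ : Fin 4)) = 3 from rfl]
      linear_combination (-1:ℝ) * h1 + (u 3*P 2 + (-1)*u 2*P 3) * hA 0 + (u 3*P 0 + (-1)*u 0*P 3) * hA 2 + ((-1)*u 2*P 0 + u 0*P 2) * hA 3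
    · refine mul_left_cancel₀ hkne ?_
      rw [mul_zero]
      simp (config := { decide := true }) only [lo, sgn4, if_true, if_false, show ((⟨0, by omega⟩ : Fin 4)) = 0 from rfl, show ((⟨1, by omega⟩ : Fin 4)) = 1 from rfl, show ((⟨2, by omega⟩ : Fin 4)) = 2 from rfl, show ((⟨3, by omega⟩ : Fin 4)) = 3 from rfl]
      linear_combination (-1:ℝ) * h0 + (u 3*P 2 + (-1)*u 2*P 3) * hA 1 + ((-1)*u 3*P 1 + u 1*P 3) * hA 2 + (u 2*P 1 + (-1)*u 1*P 2) * hA 3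
    · ring
    · ring
    · ring
    · ring
    · ring
    · ring
  · intro hw μ
    refine (key μ).mpr ?_
    fin_cases μ
    · have h123 := hw 1 2 3
      simp (config := { decide := true }) only [lo, sgn4, if_true, if_false, show ((⟨0, by omega⟩ : Fin 4)) = 0 from rfl, show ((⟨1, by omega⟩ : Fin 4)) = 1 from rfl, show ((⟨2, by omega⟩ : Fin 4)) = 2 from rfl, show ((⟨3, by omega⟩ : Fin 4)) = 3 from rfl] at h123
      norm_num [TAdef, eps4, isgn, sgn4, Fin.sum_univ_four, show ((⟨0, by omega⟩ : Fin 4)) = 0 from rfl, show ((⟨1, by omega⟩ : Fin 4)) = 1 from rfl, show ((⟨2, by omega⟩ : Fin 4)) = 2 from rfl, show ((⟨3, by omega⟩ : Fin 4)) = 3 from rfl, show ((0:Fin 4):ℕ) = 0 from rfl, show ((1:Fin 4):ℕ) = 1 from rfl, show ((2:Fin 4):ℕ) = 2 from rfl, show ((3:Fin 4):ℕ) = 3 from rfl]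
      simp (config := { decide := true }) only [if_true, if_false]
      linear_combination kappa P * h123 + (-1:ℝ) * ((-1)*u 3*P 2 + u 2*P 3) * hA 1 + (-1:ℝ) * (u 3*P 1 + (-1)*u 1*P 3) * hA 2 + (-1:ℝ) * ((-1)*u 2*P 1 + u 1*P 2) * hA 3
    · have h023 := hw 0 2 3
      simp (config := { decide := true }) only [lo, sgn4, if_true, if_false, show ((⟨0, by omega⟩ : Fin 4)) = 0 from rfl, show ((⟨1, by omega⟩ : Fin 4)) = 1 from rfl, show ((⟨2, by omega⟩ : Fin 4)) = 2 from rfl, show ((⟨3, by omega⟩ : Fin 4)) = 3 from rfl] at h023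
      norm_num [TAdef, eps4, isgn, sgn4, Fin.sum_univ_four, show ((⟨0, by omega⟩ : Fin 4)) = 0 from rfl, show ((⟨1, by omega⟩ : Fin 4)) = 1 from rfl, show ((⟨2, by omega⟩ : Fin 4)) = 2 from rfl, show ((⟨3, by omega⟩ : Fin 4)) = 3 from rfl, show ((0:Fin 4):ℕ) = 0 from rfl, show ((1:Fin 4):ℕ) = 1 from rfl, show ((2:Fin 4):ℕ) = 2 from rfl, show ((3:Fin 4):ℕ) = 3 from rfl]
      simp (config := { decide := true }) only [if_true, if_false]
      linear_combination kappa P * h023 + (-1:ℝ) * ((-1)*u 3*P 2 + u 2*P 3) * hA 0 + (-1:ℝ) * ((-1)*u 3*P 0 + u 0*P 3) * hA 2 + (-1:ℝ) * (u 2*P 0 + (-1)*u 0*P 2) * hA 3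
    · have h031 := hw 0 3 1
      simp (config := { decide := true }) only [lo, sgn4, if_true, if_false, show ((⟨0, by omega⟩ : Fin 4)) = 0 from rfl, show ((⟨1, by omega⟩ : Fin 4)) = 1 from rfl, show ((⟨2, by omega⟩ : Fin 4)) = 2 from rfl, show ((⟨3, by omega⟩ : Fin 4)) = 3 from rfl] at h031
      norm_num [TAdef, eps4, isgn, sgn4, Fin.sum_univ_four, show ((⟨0, by omega⟩ : Fin 4)) = 0 from rfl, show ((⟨1, by omega⟩ : Fin 4)) = 1 from rfl, show ((⟨2, by omega⟩ : Fin 4)) = 2 from rfl, show ((⟨3, by omega⟩ : Fin 4)) = 3 from rfl, show ((0:Fin 4):ℕ) = 0 from rfl, show ((1:Fin 4):ℕ) = 1 from rfl, show ((2:Fin 4):ℕ) = 2 from rfl, show ((3:Fin 4):ℕ) = 3 from rfl]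
      simp (config := { decide := true }) only [if_true, if_false]
      linear_combination kappa P * h031 + (-1:ℝ) * (u 3*P 1 + (-1)*u 1*P 3) * hA 0 + (-1:ℝ) * (u 3*P 0 + (-1)*u 0*P 3) * hA 1 + (-1:ℝ) * ((-1)*u 1*P 0 + u 0*P 1) * hA 3
    · have h012 := hw 0 1 2
      simp (config := { decide := true }) only [lo, sgn4, if_true, if_false, show ((⟨0, by omega⟩ : Fin 4)) = 0 from rfl, show ((⟨1, by omega⟩ : Fin 4)) = 1 from rfl, show ((⟨2, by omega⟩ : Fin 4)) = 2 from rfl, show ((⟨3, by omega⟩ : Fin 4)) = 3 from rfl] at h012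
      norm_num [TAdef, eps4, isgn, sgn4, Fin.sum_univ_four, show ((⟨0, by omega⟩ : Fin 4)) = 0 from rfl, show ((⟨1, by omega⟩ : Fin 4)) = 1 from rfl, show ((⟨2, by omega⟩ : Fin 4)) = 2 from rfl, show ((⟨3, by omega⟩ : Fin 4)) = 3 from rfl, show ((0:Fin 4):ℕ) = 0 from rfl, show ((1:Fin 4):ℕ) = 1 from rfl, show ((2:Fin 4):ℕ) = 2 from rfl, show ((3:Fin 4):ℕ) = 3 from rfl]
      simp (config := { decide := true }) only [if_true, if_false]
      linear_combination kappa P * h012 + (-1:ℝ) * ((-1)*u 2*P 1 + u 1*P 2) * hA 0 + (-1:ℝ) * ((-1)*u 2*P 0 + u 0*P 2) * hA 1 + (-1:ℝ) * (u 1*P 0 + (-1)*u 0*P 1) * hA 2
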